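/- For all natural numbers m and n, σ_{m,n} equals the value at x = 1 of θⁿ applied to the polynomial F_m(x) = (2/(3/2)_m)·Σ_{k=0}^{m} ((−m)_k·(1/2)_k)/(k!·(m+3/2)_k)·x^k, where θ denotes the operator x·d/dx on ℝ[x]. -/

import Mathlib

open Polynomial Finset

/-- The Pochhammer symbol (rising factorial) `(α)_k`. -/
noncomputable def poch (α : ℝ) (k : ℕ) : ℝ := ∏ i ∈ Finset.range k, (α + i)

/-- The quantity `σ_{m,n}`. -/
noncomputable def sigma (m n : ℕ) : ℝ :=
  ∑ k ∈ Finset.range (m + 1),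
    (m.choose k : ℝ) * (k : ℝ) ^ n * (-1) ^ k / poch ((k : ℝ) + 1 / 2) (m + 1)

/-- The operator `θ = x · d/dx` on `ℝ[x]`. -/
noncomputable def theta (p : Polynomial ℝ) : Polynomial ℝ := X * Polynomial.derivative p

lemma poch_pos {α : ℝ} (hα : 0 < α) (k : ℕ) : 0 < poch α k :=
  Finset.prod_pos fun i _ => by positivity

lemma poch_add (α : ℝ) (a b : ℕ) : poch α (a + b) = poch α a * poch (α + a) b := by
  unfold poch
  rw [Finset.prod_range_add]
  congr 1
  exact Finset.prod_congr rfl fun i _ => by push_cast; ring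

lemma poch_one (α : ℝ) : poch α 1 = α := by simp [poch]

lemma poch_neg_nat (m k : ℕ) : poch (-(m : ℝ)) k = (-1) ^ k * (m.descFactorial k) := by
  induction k with
  | zero => simp [poch]
  | succ k ih =>
    unfold poch at *
    rw [Finset.prod_range_succ, ih]
    rcases lt_or_ge k m with h | h
    · rw [Nat.descFactorial_succ]
      have hc : ((m - k : ℕ) : ℝ) = (m : ℝ) - k := by
        rw [Nat.cast_sub (by omega)]
      push_cast [hc]
      ring
    · have h2 : m.descFactorial (k + 1) = 0 :=
        Nat.descFactorial_eq_zero_iff_lt.mpr (by omega)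
      rcases eq_or_lt_of_le h with h3 | h3
      · have hz : -(m : ℝ) + k = 0 := by rw [← h3]; ring
        rw [h2, hz]; simp
      · have h1 : m.descFactorial k = 0 := Nat.descFactorial_eq_zero_iff_lt.mpr h3
        simp [h1, h2]

lemma theta_sum {s : Finset ℕ} {f : ℕ → Polynomial ℝ} :
    theta (∑ k ∈ s, f k) = ∑ k ∈ s, theta (f k) := by
  unfold theta; rw [derivative_sum, Finset.mul_sum]

lemma theta_CX (c : ℝ) (k : ℕ) : theta (C c * X ^ k) = C (c * k) * X ^ k := by
  unfold theta
  cases k with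
  | zero => simp
  | succ k =>
    rw [derivative_C_mul, derivative_X_pow]
    simp only [Nat.add_sub_cancel, Nat.cast_add, Nat.cast_one, map_mul, map_add, map_one,
      map_natCast]
    ring

lemma theta_iter_sum (n N : ℕ) (c : ℕ → ℝ) :
    theta^[n] (∑ k ∈ Finset.range N, C (c k) * X ^ k) =
      ∑ k ∈ Finset.range N, C (c k * (k : ℝ) ^ n) * X ^ k := by
  induction n with
  | zero => simp
  | succ n ih =>
    rw [Function.iterate_succ_apply', ih, theta_sum]
    refine Finset.sum_congr rfl fun k _ => ?_
    rw [theta_CX]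
    ring_nf

theorem stmt3 (m n : ℕ) :
    sigma m n =
      (theta^[n]
        ((2 / poch (3 / 2) m) •
          ∑ k ∈ Finset.range (m + 1),
            Polynomial.C
              ((poch (-(m : ℝ)) k * poch (1 / 2) k) /
                ((Nat.factorial k : ℝ) * poch ((m : ℝ) + 3 / 2) k)) * X ^ k)).eval 1 := by
  have hsmul :
      (2 / poch (3 / 2) m) •
          ∑ k ∈ Finset.range (m + 1),
            C ((poch (-(m : ℝ)) k * poch (1 / 2) k) /
                ((Nat.factorial k : ℝ) * poch ((m : ℝ) + 3 / 2) k)) * X ^ k =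
        ∑ k ∈ Finset.range (m + 1),
          C (2 / poch (3 / 2) m * ((poch (-(m : ℝ)) k * poch (1 / 2) k) /
                ((Nat.factorial k : ℝ) * poch ((m : ℝ) + 3 / 2) k))) * X ^ k := by
    rw [Finset.smul_sum]
    refine Finset.sum_congr rfl fun k _ => ?_
    rw [Polynomial.smul_eq_C_mul, map_mul, mul_assoc]
  rw [hsmul, theta_iter_sum]
  rw [Polynomial.eval_finset_sum]
  simp only [eval_mul, eval_C, eval_pow, eval_X, one_pow, mul_one]
  unfold sigma
  refine Finset.sum_congr rfl fun k hk => ?_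
  have hkm : k ≤ m := by simpa [Nat.lt_succ_iff] using hk
  -- abbreviations
  have hP : poch ((k : ℝ) + 1 / 2) (m + 1) ≠ 0 := (poch_pos (by positivity) _).ne'
  have hQ : poch (3 / 2 : ℝ) m ≠ 0 := (poch_pos (by norm_num) _).ne'
  have hS : poch ((m : ℝ) + 3 / 2) k ≠ 0 := (poch_pos (by positivity) _).ne'
  have hR : poch (1 / 2 : ℝ) k ≠ 0 := (poch_pos (by norm_num) _).ne'
  have hF : (Nat.factorial k : ℝ) ≠ 0 := Nat.cast_ne_zero.mpr k.factorial_ne_zero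
  have key : poch (1 / 2) k * poch ((k : ℝ) + 1 / 2) (m + 1) =
      1 / 2 * poch (3 / 2) m * poch ((m : ℝ) + 3 / 2) k := by
    have h1 := poch_add (1 / 2) k (m + 1)
    have h2 := poch_add (1 / 2) (m + 1) k
    have h3 := poch_add (1 / 2) 1 m
    rw [poch_one] at h3
    have e1 : (1 / 2 : ℝ) + (k : ℕ) = (k : ℝ) + 1 / 2 := by push_cast; ring
    have e2 : (1 / 2 : ℝ) + ((m : ℕ) + 1 : ℕ) = (m : ℝ) + 3 / 2 := by push_cast; ring
    have e3 : (1 / 2 : ℝ) + (1 : ℕ) = 3 / 2 := by norm_num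
    rw [e1] at h1
    rw [e2] at h2
    rw [e3] at h3
    have e4 : k + (m + 1) = (m + 1) + k := by ring
    rw [e4] at h1
    have h3' : poch (1 / 2) (m + 1) = 1 / 2 * poch (3 / 2) m := by
      rw [show m + 1 = 1 + m from by ring, h3]
    rw [h2, h3'] at h1
    linarith [h1]
  have hPval : poch ((k : ℝ) + 1 / 2) (m + 1) =
      poch (3 / 2) m * poch ((m : ℝ) + 3 / 2) k / (2 * poch (1 / 2) k) := by
    rw [eq_div_iff (mul_ne_zero two_ne_zero hR)]
    linear_combination 2 * key
  rw [poch_neg_nat, Nat.descFactorial_eq_factorial_mul_choose, hPval]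
  push_cast
  field_simp
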